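/- The spectral radius of χ(T₃,₃,ᵣ)(λ) = λ^{r+4} + λ^{r+3} − 2λ^{r+1} − 3(λ⁴ + ⋯ + λʳ) − 2λ³ + λ + 1 converges, as r → ∞, to the golden ratio (√5 + 1)/2. -/

import Mathlib

open Polynomial Filter

noncomputable section

/-- The characteristic polynomial of the Coxeter transformation of the diagram `T₃,₃,ᵣ`:
`χ(T₃,₃,ᵣ)(λ) = λ^{r+4} + λ^{r+3} − 2λ^{r+1} − 3(λ⁴ + ⋯ + λʳ) − 2λ³ + λ + 1`. -/
def chiT33 (r : ℕ) : Polynomial ℝ :=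
  X ^ (r + 4) + X ^ (r + 3) - 2 * X ^ (r + 1)
    - 3 * (∑ i ∈ Finset.Icc 4 r, X ^ i) - 2 * X ^ 3 + X + 1

lemma sum_icc_mul (r : ℕ) (hr : 3 ≤ r) (x : ℝ) :
    (∑ i ∈ Finset.Icc 4 r, x ^ i) * (x - 1) = x ^ (r + 1) - x ^ 4 := by
  rw [← Finset.Ico_add_one_right_eq_Icc]
  have key : ∑ i ∈ Finset.Ico 4 (r + 1), x ^ i
      = (∑ i ∈ Finset.range (r + 1), x ^ i) - ∑ i ∈ Finset.range 4, x ^ i := by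
    rw [Finset.range_eq_Ico, eq_sub_iff_add_eq, add_comm]
    exact Finset.sum_Ico_consecutive _ (m := 0) (n := 4) (k := r + 1) (by norm_num) (by omega)
  rw [key, sub_mul, geom_sum_mul, geom_sum_mul]
  ring

lemma eval_chi_mul (r : ℕ) (hr : 3 ≤ r) (x : ℝ) :
    (x - 1) * (chiT33 r).eval x
      = (x ^ 2 + x + 1) * (x ^ (r + 1) * (x ^ 2 - x - 1) + (x ^ 2 + x - 1)) := by
  have hs := sum_icc_mul r hr x
  simp only [chiT33, eval_add, eval_sub, eval_mul, eval_pow, eval_X, eval_one, eval_ofNat,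
    eval_finset_sum]
  linear_combination (-3 : ℝ) * hs

/-- The spectral radius (largest real root) of `χ(T₃,₃,ᵣ)` converges, as `r → ∞`, to the
golden ratio `(√5 + 1)/2`. -/
theorem spectralRadius_T33r_tendsto :
    Tendsto (fun r : ℕ => sSup {x : ℝ | (chiT33 r).IsRoot x}) atTop
      (nhds ((Real.sqrt 5 + 1) / 2)) := by
  set φ := (Real.sqrt 5 + 1) / 2 with hφdef
  have h5 : Real.sqrt 5 ^ 2 = 5 := Real.sq_sqrt (by norm_num)
  have hs5 : (2 : ℝ) < Real.sqrt 5 := by nlinarith [Real.sqrt_nonneg 5]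
  have hφ2 : φ ^ 2 = φ + 1 := by rw [hφdef]; linear_combination h5 / 4
  have hφ1 : (3 / 2 : ℝ) < φ := by rw [hφdef]; linarith
  -- roots are bounded above by φ
  have root_le : ∀ r : ℕ, 3 ≤ r → ∀ z : ℝ, (chiT33 r).IsRoot z → z ≤ φ := by
    intro r hr3 z hz
    by_contra h
    push_neg at h
    have hz1 : (1 : ℝ) < z := by linarith
    have hzz : 0 ≤ z ^ 2 - z - 1 := by
      nlinarith [mul_pos (sub_pos.2 h) (show 0 < z + φ - 1 by linarith)]
    have hg : 0 < z ^ (r + 1) * (z ^ 2 - z - 1) + (z ^ 2 + z - 1) := by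
      have h1 : 0 ≤ z ^ (r + 1) * (z ^ 2 - z - 1) :=
        mul_nonneg (pow_pos (by linarith) _).le hzz
      nlinarith
    have hkey := eval_chi_mul r hr3 z
    have hpos : 0 < (chiT33 r).eval z := by nlinarith [hkey, hg, hz1]
    exact hpos.ne' hz
  rw [Metric.tendsto_atTop]
  intro ε hε
  set y := max (3 / 2 : ℝ) (φ - ε / 2) with hy
  have hy1 : (1 : ℝ) < y := lt_of_lt_of_le (by norm_num) (le_max_left _ _)
  have hyφ : y < φ := max_lt hφ1 (by linarith)
  have hyε : φ - ε < y := lt_of_lt_of_le (by linarith) (le_max_right _ _)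
  have hyneg : 0 < 1 + y - y ^ 2 := by
    nlinarith [mul_pos (sub_pos.2 hyφ) (show 0 < φ + y - 1 by linarith)]
  have hlim : Tendsto (fun r : ℕ => y ^ (r + 1)) atTop atTop :=
    (tendsto_pow_atTop_atTop_of_one_lt hy1).comp (tendsto_add_atTop_nat 1)
  obtain ⟨N, hN⟩ := Filter.eventually_atTop.mp
    (hlim.eventually (eventually_gt_atTop ((y ^ 2 + y - 1) / (1 + y - y ^ 2))))
  refine ⟨max N 3, fun r hr => ?_⟩
  have hr3 : 3 ≤ r := le_trans (le_max_right _ _) hr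
  have hrN : N ≤ r := le_trans (le_max_left _ _) hr
  -- χ(y) < 0
  have h1 : (y ^ 2 + y - 1) / (1 + y - y ^ 2) < y ^ (r + 1) := hN r hrN
  rw [div_lt_iff₀ hyneg] at h1
  have hgy : y ^ (r + 1) * (y ^ 2 - y - 1) + (y ^ 2 + y - 1) < 0 := by
    have h2 : y ^ (r + 1) * (y ^ 2 - y - 1) = -(y ^ (r + 1) * (1 + y - y ^ 2)) := by ring
    rw [h2]; linarith
  have hχy : (chiT33 r).eval y < 0 := by
    have hkey := eval_chi_mul r hr3 y
    nlinarith [hkey, hgy, hy1]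
  -- χ(φ) > 0
  have hχφ : 0 < (chiT33 r).eval φ := by
    have hkey := eval_chi_mul r hr3 φ
    have hz : φ ^ 2 - φ - 1 = 0 := by linarith
    rw [hz, mul_zero, zero_add] at hkey
    nlinarith [hkey, hφ1]
  -- a root in [y, φ]
  obtain ⟨c, hc, hc0⟩ := intermediate_value_Icc hyφ.le
    ((chiT33 r).continuous_aeval.continuousOn (s := Set.Icc y φ)) ⟨hχy.le, hχφ.le⟩
  have hcmem : c ∈ {x : ℝ | (chiT33 r).IsRoot x} := hc0
  have hbdd : BddAbove {x : ℝ | (chiT33 r).IsRoot x} := ⟨φ, fun z hz => root_le r hr3 z hz⟩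
  have hge : y ≤ sSup {x : ℝ | (chiT33 r).IsRoot x} :=
    le_trans hc.1 (le_csSup hbdd hcmem)
  have hle : sSup {x : ℝ | (chiT33 r).IsRoot x} ≤ φ :=
    csSup_le ⟨c, hcmem⟩ (fun z hz => root_le r hr3 z hz)
  rw [Real.dist_eq, abs_lt]
  constructor <;> linarith

end
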